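/- Fix a point (Q⁰,q⁰) with each Q⁰_i Hermitian positive semidefinite and each q⁰_j ≥ 0, and set ϑ_i = σ² + ∑_{k≠i} h_{D,i}^H Q⁰_k h_{D,i} + ∑_{j} q⁰_j c_{ji} for i = 1,…,K_D and Θ = σ² I + ∑_{k=1}^{K_D} H_SI Q⁰_k H_SI^H. Define the affine function ĝ(Q,q) = g(Q⁰,q⁰) + ∑_{i=1}^{K_D} ∑_{k≠i} ϑ_i^{-1} · h_{D,i}^H (Q_k − Q⁰_k) h_{D,i} + ∑_{i=1}^{K_D} ∑_{j=1}^{K_U} ϑ_i^{-1} c_{ji} (q_j − q⁰_j) + ∑_{i=1}^{K_D} tr(H_SI^H Θ^{-1} H_SI (Q_i − Q⁰_i)) (all summands are real because the matrices involved are Hermitian). Then g(Q,q) ≤ ĝ(Q,q) for every tuple Q of N_T×N_T Hermitian positive semidefinite matrices and every tuple q of nonnegative reals, with equality when (Q,q) = (Q⁰,q⁰). -/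

import Mathlib

open Matrix Finset ComplexOrder

/-- The function `g(Q,q)` from the MAXDET reformulation. -/
noncomputable def gFun {NT NR KD KU : ℕ} (σsq : ℝ)
    (HSI : Matrix (Fin NR) (Fin NT) ℂ)
    (hD : Fin KD → (Fin NT → ℂ))
    (c : Fin KU → Fin KD → ℝ)
    (p : (Fin KD → Matrix (Fin NT) (Fin NT) ℂ) × (Fin KU → ℝ)) : ℝ :=
  (∑ i, Real.log (σsq +
      (∑ k ∈ Finset.univ.filter (fun k => k ≠ i),
        (star (hD i) ⬝ᵥ (p.1 k).mulVec (hD i)).re)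
      + ∑ j, p.2 j * c j i))
  + Real.log (((σsq : ℂ) • (1 : Matrix (Fin NR) (Fin NR) ℂ) +
      ∑ i, HSI * p.1 i * HSIᴴ).det.re)

/-- The coefficients `ϑ_i` of the affine majorant of `g` at `(Q⁰, q⁰)`. -/
noncomputable def thetaCoef {NT NR KD KU : ℕ} (σsq : ℝ)
    (HSI : Matrix (Fin NR) (Fin NT) ℂ)
    (hD : Fin KD → (Fin NT → ℂ)) (c : Fin KU → Fin KD → ℝ)
    (Q0 : Fin KD → Matrix (Fin NT) (Fin NT) ℂ) (q0 : Fin KU → ℝ)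
    (i : Fin KD) : ℝ :=
  σsq + (∑ k ∈ Finset.univ.filter (fun k => k ≠ i),
      (star (hD i) ⬝ᵥ (Q0 k).mulVec (hD i)).re)
    + ∑ j, q0 j * c j i

/-- The matrix `Θ = σ² I + ∑ₖ H_SI Q⁰ₖ H_SIᴴ`. -/
noncomputable def ThetaMat {NT NR KD : ℕ} (σsq : ℝ)
    (HSI : Matrix (Fin NR) (Fin NT) ℂ)
    (Q0 : Fin KD → Matrix (Fin NT) (Fin NT) ℂ) :
    Matrix (Fin NR) (Fin NR) ℂ :=
  (σsq : ℂ) • (1 : Matrix (Fin NR) (Fin NR) ℂ) + ∑ k, HSI * Q0 k * HSIᴴ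

/-- The affine majorant `ĝ(Q,q)` of `g` at the expansion point `(Q⁰, q⁰)`. -/
noncomputable def gHat {NT NR KD KU : ℕ} (σsq : ℝ)
    (HSI : Matrix (Fin NR) (Fin NT) ℂ)
    (hD : Fin KD → (Fin NT → ℂ)) (c : Fin KU → Fin KD → ℝ)
    (Q0 : Fin KD → Matrix (Fin NT) (Fin NT) ℂ) (q0 : Fin KU → ℝ)
    (p : (Fin KD → Matrix (Fin NT) (Fin NT) ℂ) × (Fin KU → ℝ)) : ℝ :=
  gFun σsq HSI hD c (Q0, q0)
  + (∑ i, ∑ k ∈ Finset.univ.filter (fun k => k ≠ i),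
      (thetaCoef σsq HSI hD c Q0 q0 i)⁻¹ *
        (star (hD i) ⬝ᵥ (p.1 k - Q0 k).mulVec (hD i)).re)
  + (∑ i, ∑ j, (thetaCoef σsq HSI hD c Q0 q0 i)⁻¹ * c j i * (p.2 j - q0 j))
  + ∑ i : Fin KD,
      ((HSIᴴ * (ThetaMat σsq HSI Q0)⁻¹ * HSI * (p.1 i - Q0 i)).trace).re

/- ########## auxiliary lemmas ########## -/

lemma trace_eq_sum_eig {n : ℕ} {A : Matrix (Fin n) (Fin n) ℂ} (hA : A.IsHermitian) :
    A.trace = ((∑ i, hA.eigenvalues i : ℝ) : ℂ) := by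
  conv_lhs => rw [hA.spectral_theorem]
  rw [Unitary.conjStarAlgAut_apply, trace_mul_comm, ← mul_assoc, Unitary.coe_star_mul_self, one_mul, trace_diagonal]
  push_cast
  rfl

lemma logdet_le {n : ℕ} {A B : Matrix (Fin n) (Fin n) ℂ} (hA : A.PosDef) (hB : B.PosDef) :
    Real.log B.det.re ≤ Real.log A.det.re + ((A⁻¹ * (B - A)).trace).re := by
  have hAinv : (A⁻¹).PosDef := hA.inv
  set R := (open scoped MatrixOrder in CFC.sqrt (A⁻¹)) with hRdef
  have hRps : R.PosSemidef := open scoped MatrixOrder in (CFC.sqrt_nonneg (A⁻¹)).posSemidef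
  have hRR : R * R = A⁻¹ := open scoped MatrixOrder in CFC.sqrt_mul_sqrt_self (A⁻¹) hAinv.posSemidef.nonneg
  set M := R * B * R with hMdef
  have hMps : M.PosSemidef := by
    have := hB.posSemidef.conjTranspose_mul_mul_same R
    rwa [hRps.isHermitian.eq] at this
  have ha0 : (0:ℂ) < A.det := hA.det_pos
  have hb0 : (0:ℂ) < B.det := hB.det_pos
  have haRe : 0 < A.det.re := by rw [Complex.lt_def] at ha0; simpa using ha0.1
  have hbRe : 0 < B.det.re := by rw [Complex.lt_def] at hb0; simpa using hb0.1
  have haC : A.det = (A.det.re : ℂ) := by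
    rw [Complex.lt_def] at ha0
    exact Complex.ext rfl (by simpa using ha0.2.symm)
  have hbC : B.det = (B.det.re : ℂ) := by
    rw [Complex.lt_def] at hb0
    exact Complex.ext rfl (by simpa using hb0.2.symm)
  set a := A.det.re
  set b := B.det.re
  have hdetM : M.det = ((b / a : ℝ) : ℂ) := by
    have h1 : M.det = R.det * B.det * R.det := by rw [hMdef, det_mul, det_mul]
    have h2 : R.det * B.det * R.det = (R * R).det * B.det := by rw [det_mul]; ring
    rw [h1, h2, hRR, det_nonsing_inv, Ring.inverse_eq_inv, haC, hbC]
    push_cast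
    field_simp
  have hherm := hMps.isHermitian
  set lam := hherm.eigenvalues with hlam
  have hprod : ∏ i, lam i = b / a := by
    have h1 : ((∏ i, lam i : ℝ) : ℂ) = ((b / a : ℝ) : ℂ) := by
      rw [← hdetM, hherm.det_eq_prod_eigenvalues]
      push_cast
      rfl
    exact_mod_cast h1
  have hlampos : ∀ i, 0 < lam i := by
    intro i
    rcases lt_or_eq_of_le (hMps.eigenvalues_nonneg i) with h | h
    · exact h
    · exfalso
      have h0 : ∏ i, lam i = 0 := Finset.prod_eq_zero (Finset.mem_univ i) h.symm
      rw [hprod] at h0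
      have := div_pos hbRe haRe
      linarith
  have htrM : M.trace = ((∑ i, lam i : ℝ) : ℂ) := trace_eq_sum_eig hherm
  have htrAB : M.trace = (A⁻¹ * B).trace := by
    rw [hMdef, trace_mul_comm, ← mul_assoc, hRR]
  have hAdetUnit : IsUnit A.det := by
    rw [haC]; simp only [isUnit_iff_ne_zero]; exact_mod_cast haRe.ne'
  have htr : ((A⁻¹ * (B - A)).trace).re = (∑ i, lam i) - n := by
    rw [Matrix.mul_sub, trace_sub, Matrix.nonsing_inv_mul A hAdetUnit, ← htrAB, htrM, trace_one]
    simp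
  have key : Real.log (b / a) ≤ (∑ i, lam i) - n := by
    calc Real.log (b / a) = Real.log (∏ i, lam i) := by rw [hprod]
    _ = ∑ i, Real.log (lam i) := Real.log_prod (fun i _ => (hlampos i).ne')
    _ ≤ ∑ i, (lam i - 1) := Finset.sum_le_sum (fun i _ => Real.log_le_sub_one_of_pos (hlampos i))
    _ = (∑ i, lam i) - n := by rw [Finset.sum_sub_distrib]; simp
  rw [htr]
  have hlog : Real.log b = Real.log (b / a) + Real.log a := by
    rw [Real.log_div hbRe.ne' haRe.ne']; ring
  rw [hlog]
  linarith

lemma thetaMat_posDef {NT NR KD : ℕ} {σsq : ℝ} (hσ : 0 < σsq)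
    (HSI : Matrix (Fin NR) (Fin NT) ℂ)
    {Q : Fin KD → Matrix (Fin NT) (Fin NT) ℂ} (hQ : ∀ i, (Q i).PosSemidef) :
    (ThetaMat σsq HSI Q).PosDef := by
  apply Matrix.PosDef.add_posSemidef
  · rw [Matrix.smul_one_eq_diagonal]
    exact Matrix.posDef_diagonal_iff.mpr fun _ => by exact_mod_cast hσ
  · exact Finset.sum_induction _ _ (fun _ _ ha hb => ha.add hb) Matrix.PosSemidef.zero
      (fun i _ => (hQ i).mul_mul_conjTranspose_same HSI)

lemma re_form_nonneg {n : ℕ} {Q : Matrix (Fin n) (Fin n) ℂ} (hQ : Q.PosSemidef)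
    (x : Fin n → ℂ) : 0 ≤ (star x ⬝ᵥ Q.mulVec x).re := by
  have := hQ.dotProduct_mulVec_nonneg x
  rw [Complex.le_def] at this
  simpa using this.1


/-- The affine function `ĝ` obtained by first-order approximation of the
concave function `g` at `(Q⁰, q⁰)` majorizes `g` on the set of Hermitian PSD
tuples and nonnegative powers, with equality at the expansion point. -/
theorem gFun_le_gHat {NT NR KD KU : ℕ} (σsq : ℝ) (hσ : 0 < σsq)
    (HSI : Matrix (Fin NR) (Fin NT) ℂ)
    (hD : Fin KD → (Fin NT → ℂ))
    (c : Fin KU → Fin KD → ℝ) (hc : ∀ j i, 0 ≤ c j i)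
    (Q0 : Fin KD → Matrix (Fin NT) (Fin NT) ℂ) (hQ0 : ∀ i, (Q0 i).PosSemidef)
    (q0 : Fin KU → ℝ) (hq0 : ∀ j, 0 ≤ q0 j) :
    (∀ (Q : Fin KD → Matrix (Fin NT) (Fin NT) ℂ) (q : Fin KU → ℝ),
      (∀ i, (Q i).PosSemidef) → (∀ j, 0 ≤ q j) →
        gFun σsq HSI hD c (Q, q) ≤ gHat σsq HSI hD c Q0 q0 (Q, q)) ∧
    gHat σsq HSI hD c Q0 q0 (Q0, q0) = gFun σsq HSI hD c (Q0, q0) := by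
  constructor
  · intro Q q hQ hq
    -- positivity of scalar terms
    have hpos : ∀ (P : Fin KD → Matrix (Fin NT) (Fin NT) ℂ) (p : Fin KU → ℝ),
        (∀ i, (P i).PosSemidef) → (∀ j, 0 ≤ p j) → ∀ i : Fin KD,
        0 < σsq + (∑ k ∈ Finset.univ.filter (fun k => k ≠ i),
          (star (hD i) ⬝ᵥ (P k).mulVec (hD i)).re) + ∑ j, p j * c j i := by
      intro P p hP hp i
      have h1 : 0 ≤ ∑ k ∈ Finset.univ.filter (fun k => k ≠ i),
          (star (hD i) ⬝ᵥ (P k).mulVec (hD i)).re :=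
        Finset.sum_nonneg fun k _ => re_form_nonneg (hP k) _
      have h2 : 0 ≤ ∑ j, p j * c j i :=
        Finset.sum_nonneg fun j _ => mul_nonneg (hp j) (hc j i)
      linarith
    -- scalar inequality for each i
    have hscalar : ∀ i : Fin KD,
        Real.log (σsq + (∑ k ∈ Finset.univ.filter (fun k => k ≠ i),
            (star (hD i) ⬝ᵥ (Q k).mulVec (hD i)).re) + ∑ j, q j * c j i)
        ≤ Real.log (thetaCoef σsq HSI hD c Q0 q0 i)
          + (∑ k ∈ Finset.univ.filter (fun k => k ≠ i),
              (thetaCoef σsq HSI hD c Q0 q0 i)⁻¹ *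
                (star (hD i) ⬝ᵥ (Q k - Q0 k).mulVec (hD i)).re)
          + ∑ j, (thetaCoef σsq HSI hD c Q0 q0 i)⁻¹ * c j i * (q j - q0 j) := by
      intro i
      set a := thetaCoef σsq HSI hD c Q0 q0 i with hadef
      set b := σsq + (∑ k ∈ Finset.univ.filter (fun k => k ≠ i),
          (star (hD i) ⬝ᵥ (Q k).mulVec (hD i)).re) + ∑ j, q j * c j i with hbdef
      have ha : 0 < a := hpos Q0 q0 hQ0 hq0 i
      have hb : 0 < b := hpos Q q hQ hq i
      have hlog : Real.log b ≤ Real.log a + a⁻¹ * (b - a) := by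
        have := Real.log_le_sub_one_of_pos (div_pos hb ha)
        rw [Real.log_div hb.ne' ha.ne'] at this
        have h2 : b / a - 1 = a⁻¹ * (b - a) := by field_simp
        linarith [h2 ▸ this]
      have hformdiff : ∀ k, (star (hD i) ⬝ᵥ (Q k - Q0 k).mulVec (hD i)).re =
          (star (hD i) ⬝ᵥ (Q k).mulVec (hD i)).re -
          (star (hD i) ⬝ᵥ (Q0 k).mulVec (hD i)).re := by
        intro k
        rw [Matrix.sub_mulVec, dotProduct_sub, Complex.sub_re]
      have hlin : (∑ k ∈ Finset.univ.filter (fun k => k ≠ i),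
            a⁻¹ * (star (hD i) ⬝ᵥ (Q k - Q0 k).mulVec (hD i)).re)
          + ∑ j, a⁻¹ * c j i * (q j - q0 j) = a⁻¹ * (b - a) := by
        simp_rw [hformdiff]
        rw [← Finset.mul_sum]
        have : ∀ j, a⁻¹ * c j i * (q j - q0 j) = a⁻¹ * (q j * c j i - q0 j * c j i) := by
          intro j; ring
        simp_rw [this]
        rw [← Finset.mul_sum, ← mul_add]
        congr 1
        rw [hbdef, hadef, thetaCoef]
        rw [Finset.sum_sub_distrib, Finset.sum_sub_distrib]
        ring
      linarith [hlin ▸ hlog]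
    -- matrix inequality
    have hApd : (ThetaMat σsq HSI Q0).PosDef := thetaMat_posDef hσ HSI hQ0
    have hBpd : (ThetaMat σsq HSI Q).PosDef := thetaMat_posDef hσ HSI hQ
    have hmat : Real.log ((ThetaMat σsq HSI Q).det.re)
        ≤ Real.log ((ThetaMat σsq HSI Q0).det.re)
          + ∑ i : Fin KD,
            ((HSIᴴ * (ThetaMat σsq HSI Q0)⁻¹ * HSI * (Q i - Q0 i)).trace).re := by
      have h1 := logdet_le hApd hBpd
      have h2 : ((ThetaMat σsq HSI Q0)⁻¹ *
            (ThetaMat σsq HSI Q - ThetaMat σsq HSI Q0)).trace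
          = ∑ i : Fin KD,
            (HSIᴴ * (ThetaMat σsq HSI Q0)⁻¹ * HSI * (Q i - Q0 i)).trace := by
        have hdiff : ThetaMat σsq HSI Q - ThetaMat σsq HSI Q0
            = ∑ i, HSI * (Q i - Q0 i) * HSIᴴ := by
          rw [ThetaMat, ThetaMat]
          rw [add_sub_add_left_eq_sub, ← Finset.sum_sub_distrib]
          congr 1
          ext i : 1
          rw [Matrix.mul_sub, Matrix.sub_mul]
        rw [hdiff, Finset.mul_sum, trace_sum]
        congr 1
        ext i : 1
        rw [← Matrix.mul_assoc ((ThetaMat σsq HSI Q0)⁻¹) (HSI * (Q i - Q0 i)) HSIᴴ,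
          Matrix.trace_mul_cycle ((ThetaMat σsq HSI Q0)⁻¹) (HSI * (Q i - Q0 i)) HSIᴴ,
          ← Matrix.mul_assoc (HSIᴴ * (ThetaMat σsq HSI Q0)⁻¹) HSI (Q i - Q0 i)]
      rw [h2] at h1
      rw [Complex.re_sum] at h1
      exact h1
    -- combine
    rw [gFun, gHat, gFun]
    have hsum := Finset.sum_le_sum (fun i (_ : i ∈ Finset.univ) => hscalar i)
    rw [Finset.sum_add_distrib, Finset.sum_add_distrib] at hsum
    have hBeq : ((σsq : ℂ) • (1 : Matrix (Fin NR) (Fin NR) ℂ) +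
        ∑ i, HSI * Q i * HSIᴴ) = ThetaMat σsq HSI Q := rfl
    have hAeq : ((σsq : ℂ) • (1 : Matrix (Fin NR) (Fin NR) ℂ) +
        ∑ i, HSI * Q0 i * HSIᴴ) = ThetaMat σsq HSI Q0 := rfl
    simp only [hBeq, hAeq]
    have hth : ∀ i, σsq + (∑ k ∈ Finset.univ.filter (fun k => k ≠ i),
        (star (hD i) ⬝ᵥ (Q0 k).mulVec (hD i)).re) + ∑ j, q0 j * c j i
        = thetaCoef σsq HSI hD c Q0 q0 i := fun i => rfl
    simp only [hth]
    linarith [hsum, hmat]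
  · rw [gHat]
    simp only [sub_self, Matrix.zero_mulVec, dotProduct_zero, Complex.zero_re, mul_zero,
      Matrix.mul_zero, trace_zero, Finset.sum_const_zero, add_zero]
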